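/- (Case α = 0, β ≠ 0.) Assume α = 0 and β ≠ 0. Then a quadruple of twice differentiable functions (q¹, q², v¹, v²) satisfies the Hamilton–Cartan system (i) q̇¹ = v¹, (ii) q̇² = v², (iii) v̇¹ = β(q¹−q²) − αv², (iv) αv¹ = β(q¹−q²) if and only if v¹ = q̇¹, v² = q̇², the constraints q¹ = q² and v¹ = v² hold, and the final equation of motion q̈² = 0 holds. -/
import Mathlib


/-- (Case `α = 0`, `β ≠ 0`.) A quadruple of twice differentiable functions
`(q¹, q², v¹, v²)` satisfies the Hamilton–Cartan system
(i) `q̇¹ = v¹`, (ii) `q̇² = v²`, (iii) `v̇¹ = β(q¹−q²) − αv²`,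
(iv) `αv¹ = β(q¹−q²)` if and only if `v¹ = q̇¹`, `v² = q̇²`, the constraints
`q¹ = q²` and `v¹ = v²` hold, and the final equation of motion `q̈² = 0` holds. -/
theorem stmt10 (α β : ℝ) (hα : α = 0) (hβ : β ≠ 0) (q1 q2 v1 v2 : ℝ → ℝ)
    (hq1 : Differentiable ℝ q1) (hq1' : Differentiable ℝ (deriv q1))
    (hq2 : Differentiable ℝ q2) (hq2' : Differentiable ℝ (deriv q2))
    (hv1 : Differentiable ℝ v1) (hv1' : Differentiable ℝ (deriv v1))
    (hv2 : Differentiable ℝ v2) (hv2' : Differentiable ℝ (deriv v2)) :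
    ((∀ t, deriv q1 t = v1 t) ∧ (∀ t, deriv q2 t = v2 t) ∧
        (∀ t, deriv v1 t = β * (q1 t - q2 t) - α * v2 t) ∧
        (∀ t, α * v1 t = β * (q1 t - q2 t))) ↔
      ((∀ t, v1 t = deriv q1 t) ∧ (∀ t, v2 t = deriv q2 t) ∧
        (∀ t, q1 t = q2 t) ∧ (∀ t, v1 t = v2 t) ∧
        (∀ t, deriv (deriv q2) t = 0)) := by
  subst hα
  constructor
  · rintro ⟨h1, h2, h3, h4⟩
    have hq : ∀ t, q1 t = q2 t := by
      intro t
      have hz : β * (q1 t - q2 t) = 0 := by linarith [h4 t]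
      have := (mul_eq_zero.mp hz).resolve_left hβ
      linarith
    have heqd : deriv q1 = deriv q2 := by
      have : q1 = q2 := funext hq
      rw [this]
    have hv : ∀ t, v1 t = v2 t := by
      intro t
      rw [← h1 t, ← h2 t, heqd]
    refine ⟨fun t => (h1 t).symm, fun t => (h2 t).symm, hq, hv, ?_⟩
    intro t
    have hd2 : deriv q2 = v1 := by
      funext s; rw [h2 s, ← hv s]
    rw [hd2, h3 t, hq t]
    ring
  · rintro ⟨h1, h2, hq, hv, hdd⟩
    refine ⟨fun t => (h1 t).symm, fun t => (h2 t).symm, ?_, ?_⟩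
    · intro t
      have hv1eq : v1 = deriv q2 := by
        funext s; rw [hv s, h2 s]
      rw [hv1eq, hdd t, hq t]
      ring
    · intro t
      rw [hq t]; ring
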